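/- Let H be a d-dimensional complex Hilbert space with orthonormal bases {ψ_j}_{j=1}^d and {φ_j}_{j=1}^d, η_1,…,η_d positive reals with Σ_j η_j² = 1, Ψ_η := Σ_j η_j ψ_j ⊗ φ_j ∈ H ⊗ H, and α > 0. Let {p_a}_{a=1}^{d²} be an orthonormal basis of H ⊗ H and let L_a be the (unique) linear operators on H with p_a = √(d/α)·(𝕀 ⊗ L_a)Ψ_η. Let (M_i^{(J)})_{i ∈ I, J ∈ 𝒥} be a finite family of linear operators on H (the king's measurement operators). Assume the solution condition: for every J ∈ 𝒥, every a ∈ {1,…,d²}, and every i ≠ i' in I, at most one of ⟨p_a, (𝕀 ⊗ M_i^{(J)})Ψ_η⟩ and ⟨p_a, (𝕀 ⊗ M_{i'}^{(J)})Ψ_η⟩ is nonzero. Then, setting X^{(J,i)} := {a : ⟨L_a, M_i^{(J)}⟩_Sc ≠ 0}, one has: (a) ⟨L_a, L_{a'}⟩_Sc = α·δ_{aa'} for all a, a'; (b) X^{(J,i)} ∩ X^{(J,i')} = ∅ for every J and every i ≠ i'; and (c) M_i^{(J)} = (1/α) Σ_{a ∈ X^{(J,i)}} ⟨L_a, M_i^{(J)}⟩_Sc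 · L_a for every (J,i). -/

import Mathlib

open scoped Matrix Classical

/-- The elementary tensor `u ⊗ v` of two vectors of `ℂ^d`, realized in
`ℂ^d ⊗ ℂ^d ≅ ℂ^(d×d)`. -/
noncomputable def tensVec {d : ℕ} (u v : EuclideanSpace ℂ (Fin d)) :
    EuclideanSpace ℂ (Fin d × Fin d) :=
  (EuclideanSpace.equiv (Fin d × Fin d) ℂ).symm fun p => u p.1 * v p.2

/-- The operator `𝕀 ⊗ L` on `ℂ^d ⊗ ℂ^d ≅ ℂ^(d×d)`, acting as the identity on the
first tensor factor and as the matrix `L` on the second. -/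
noncomputable def idTensor {d : ℕ} (L : Matrix (Fin d) (Fin d) ℂ) :
    EuclideanSpace ℂ (Fin d × Fin d) →ₗ[ℂ] EuclideanSpace ℂ (Fin d × Fin d) :=
  Matrix.toEuclideanLin (Matrix.of fun p q : Fin d × Fin d =>
    (if p.1 = q.1 then (1 : ℂ) else 0) * L p.2 q.2)

/-- The sesquilinear form `⟨A,B⟩_Sc := d ∑_j η_j² ⟨φ_j, A†B φ_j⟩` on operators
(matrices) on `ℂ^d`. -/
noncomputable def ScInner {d : ℕ} (φ : Fin d → EuclideanSpace ℂ (Fin d)) (η : Fin d → ℝ)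
    (A B : Matrix (Fin d) (Fin d) ℂ) : ℂ :=
  (d : ℂ) * ∑ j, ((η j ^ 2 : ℝ) : ℂ) *
    (inner ℂ (φ j) (Matrix.toEuclideanLin (Aᴴ * B) (φ j)) : ℂ)

section Aux

variable {d : ℕ}

lemma tensVec_apply (u v : EuclideanSpace ℂ (Fin d)) (p : Fin d × Fin d) :
    tensVec u v p = u p.1 * v p.2 := rfl

lemma idTensor_apply (L : Matrix (Fin d) (Fin d) ℂ)
    (x : EuclideanSpace ℂ (Fin d × Fin d)) (p : Fin d × Fin d) :
    idTensor L x p = ∑ k, L p.2 k * x (p.1, k) := by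
  show ((WithLp.equiv 2 _).symm (Matrix.mulVec _ ((WithLp.equiv 2 _) x))) p = _
  simp only [WithLp.equiv_symm_apply, PiLp.toLp_apply, Matrix.mulVec, dotProduct]
  rw [Fintype.sum_prod_type]
  rw [Finset.sum_eq_single p.1]
  · simp [Matrix.of_apply]
  · intro b _ hb
    simp [Matrix.of_apply, Ne.symm hb]
  · simp

lemma inner_tensVec (u v u' v' : EuclideanSpace ℂ (Fin d)) :
    (inner ℂ (tensVec u v) (tensVec u' v') : ℂ)
      = (inner ℂ u u' : ℂ) * (inner ℂ v v' : ℂ) := by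
  simp only [PiLp.inner_apply, RCLike.inner_apply, tensVec_apply]
  rw [Fintype.sum_prod_type, Finset.sum_mul_sum]
  apply Finset.sum_congr rfl
  intro i _
  apply Finset.sum_congr rfl
  intro j _
  simp only [map_mul]
  ring

lemma idTensor_tensVec (L : Matrix (Fin d) (Fin d) ℂ) (u v : EuclideanSpace ℂ (Fin d)) :
    idTensor L (tensVec u v) = tensVec u (Matrix.toEuclideanLin L v) := by
  ext p
  rw [idTensor_apply, tensVec_apply]
  have : Matrix.toEuclideanLin L v p.2 = ∑ k, L p.2 k * v k := by
    show ((WithLp.equiv 2 _).symm (Matrix.mulVec _ ((WithLp.equiv 2 _) v))) p.2 = _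
    simp [Matrix.mulVec, dotProduct]
  rw [this, Finset.mul_sum]
  apply Finset.sum_congr rfl
  intro k _
  rw [tensVec_apply]
  ring

lemma idTensor_matrix_sum {ι : Type*} (s : Finset ι) (C : ι → Matrix (Fin d) (Fin d) ℂ)
    (x : EuclideanSpace ℂ (Fin d × Fin d)) :
    idTensor (∑ a ∈ s, C a) x = ∑ a ∈ s, idTensor (C a) x := by
  ext p
  rw [idTensor_apply]
  have : (∑ a ∈ s, idTensor (C a) x) p = ∑ a ∈ s, idTensor (C a) x p := by
    classical
    induction s using Finset.induction with
    | empty => rfl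
    | insert _ _ h ih => simp [Finset.sum_insert h, ih]
  rw [this]
  simp only [idTensor_apply, Matrix.sum_apply, Finset.sum_mul]
  rw [Finset.sum_comm]

lemma idTensor_matrix_smul (c : ℂ) (A : Matrix (Fin d) (Fin d) ℂ)
    (x : EuclideanSpace ℂ (Fin d × Fin d)) :
    idTensor (c • A) x = c • idTensor A x := by
  ext p
  rw [idTensor_apply]
  have : (c • idTensor A x) p = c * idTensor A x p := rfl
  rw [this, idTensor_apply, Finset.mul_sum]
  apply Finset.sum_congr rfl
  intro k _
  simp [Matrix.smul_apply]
  ring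

lemma idTensor_matrix_sub (A B : Matrix (Fin d) (Fin d) ℂ)
    (x : EuclideanSpace ℂ (Fin d × Fin d)) :
    idTensor (A - B) x = idTensor A x - idTensor B x := by
  ext p
  have : (idTensor A x - idTensor B x) p = idTensor A x p - idTensor B x p := rfl
  rw [idTensor_apply, this, idTensor_apply, idTensor_apply, ← Finset.sum_sub_distrib]
  apply Finset.sum_congr rfl
  intro k _
  simp [Matrix.sub_apply]
  ring

lemma toEuclideanLin_mul_apply (A B : Matrix (Fin d) (Fin d) ℂ)
    (v : EuclideanSpace ℂ (Fin d)) :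
    Matrix.toEuclideanLin (A * B) v
      = Matrix.toEuclideanLin A (Matrix.toEuclideanLin B v) := by
  simp only [Matrix.toEuclideanLin_apply]
  simp [Matrix.mulVec_mulVec]

/-- `ScInner` in terms of vectors. -/
lemma ScInner_eq_sum (φ : OrthonormalBasis (Fin d) ℂ (EuclideanSpace ℂ (Fin d)))
    (η : Fin d → ℝ) (A B : Matrix (Fin d) (Fin d) ℂ) :
    ScInner (fun j => φ j) η A B
      = (d : ℂ) * ∑ j, ((η j ^ 2 : ℝ) : ℂ) *
          (inner ℂ (Matrix.toEuclideanLin A (φ j)) (Matrix.toEuclideanLin B (φ j)) : ℂ) := by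
  unfold ScInner
  congr 1
  apply Finset.sum_congr rfl
  intro j _
  congr 1
  rw [toEuclideanLin_mul_apply, Matrix.toEuclideanLin_conjTranspose_eq_adjoint,
    LinearMap.adjoint_inner_right]

end Aux

/-- Theorem 3 of the paper: if Alice's rank-one PVM `{|p_a⟩⟨p_a|}` together with the
initial entangled state `Ψ_η` solves the mean king's problem for the king's
measurement operators `M_i^{(J)}`, then the operators `L_a` defined by
`p_a = √(d/α) (𝕀 ⊗ L_a)Ψ_η` satisfy: (a) `⟨L_a, L_{a'}⟩_Sc = α δ_{aa'}` (condition
(c3')); (b) the index sets `X^{(J,i)} = {a : ⟨L_a, M_i^{(J)}⟩_Sc ≠ 0}` are disjoint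
for distinct outcomes of the same measurement (condition (c2')); and (c)
`M_i^{(J)} = (1/α) ∑_{a ∈ X^{(J,i)}} ⟨L_a, M_i^{(J)}⟩_Sc L_a` (condition (c1')). -/
theorem mean_king_solution_gives_error_operators
    (d : ℕ) (hd : 1 ≤ d)
    (ψ φ : OrthonormalBasis (Fin d) ℂ (EuclideanSpace ℂ (Fin d)))
    (η : Fin d → ℝ) (hη : ∀ j, 0 < η j) (hη1 : ∑ j, η j ^ 2 = 1)
    (α : ℝ) (hα : 0 < α)
    (Ψ : EuclideanSpace ℂ (Fin d × Fin d))
    (hΨ : Ψ = ∑ j, ((η j : ℝ) : ℂ) • tensVec (ψ j) (φ j))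
    (p : OrthonormalBasis (Fin (d ^ 2)) ℂ (EuclideanSpace ℂ (Fin d × Fin d)))
    (L : Fin (d ^ 2) → Matrix (Fin d) (Fin d) ℂ)
    (hL : ∀ a : Fin (d ^ 2),
      (p a : EuclideanSpace ℂ (Fin d × Fin d))
        = ((Real.sqrt (d / α) : ℝ) : ℂ) • idTensor (L a) Ψ)
    {𝒥 I : Type*} [Fintype 𝒥] [Fintype I]
    (M : 𝒥 → I → Matrix (Fin d) (Fin d) ℂ)
    (hsol : ∀ (Jm : 𝒥) (a : Fin (d ^ 2)) (i i' : I), i ≠ i' →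
      (inner ℂ (p a : EuclideanSpace ℂ (Fin d × Fin d)) (idTensor (M Jm i) Ψ) : ℂ) = 0 ∨
      (inner ℂ (p a : EuclideanSpace ℂ (Fin d × Fin d)) (idTensor (M Jm i') Ψ) : ℂ) = 0) :
    (∀ a a' : Fin (d ^ 2),
      ScInner (fun j => φ j) η (L a) (L a') = if a = a' then (α : ℂ) else 0) ∧
    (∀ (Jm : 𝒥) (i i' : I), i ≠ i' →
      {a : Fin (d ^ 2) | ScInner (fun j => φ j) η (L a) (M Jm i) ≠ 0} ∩
        {a : Fin (d ^ 2) | ScInner (fun j => φ j) η (L a) (M Jm i') ≠ 0} = ∅) ∧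
    (∀ (Jm : 𝒥) (i : I),
      M Jm i = ((α : ℝ) : ℂ)⁻¹ •
        ∑ a ∈ Finset.univ.filter
            (fun a : Fin (d ^ 2) => ScInner (fun j => φ j) η (L a) (M Jm i) ≠ 0),
          ScInner (fun j => φ j) η (L a) (M Jm i) • L a) := by
  classical
  -- the central inner-product formula
  have hψ := orthonormal_iff_ite.mp ψ.orthonormal
  have hinner : ∀ A B : Matrix (Fin d) (Fin d) ℂ,
      (inner ℂ (idTensor A Ψ) (idTensor B Ψ) : ℂ)
        = ∑ j, ((η j ^ 2 : ℝ) : ℂ) *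
            (inner ℂ (Matrix.toEuclideanLin A (φ j)) (Matrix.toEuclideanLin B (φ j)) : ℂ) := by
    intro A B
    rw [hΨ]
    simp only [map_sum, map_smul, idTensor_tensVec, inner_sum, sum_inner,
      inner_smul_left, inner_smul_right, inner_tensVec, hψ, Complex.conj_ofReal]
    simp only [boole_mul, mul_ite, mul_zero, Finset.sum_ite_eq', Finset.mem_univ, if_true]
    apply Finset.sum_congr rfl
    intro j _
    push_cast
    ring
  have hSc : ∀ A B : Matrix (Fin d) (Fin d) ℂ,
      ScInner (fun j => φ j) η A B = (d : ℂ) * (inner ℂ (idTensor A Ψ) (idTensor B Ψ) : ℂ) := by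
    intro A B
    rw [ScInner_eq_sum φ η A B, hinner]
  -- constants
  have hdR : (0:ℝ) < (d:ℝ) := by exact_mod_cast Nat.lt_of_lt_of_le Nat.zero_lt_one hd
  have hdα : (0:ℝ) < (d:ℝ) / α := div_pos hdR hα
  set r : ℝ := Real.sqrt ((d:ℝ) / α) with hrdef
  have hr2 : r ^ 2 = (d:ℝ) / α := Real.sq_sqrt hdα.le
  have hr0 : 0 < r := Real.sqrt_pos.mpr hdα
  have hrc0 : ((r:ℝ):ℂ) ≠ 0 := by exact_mod_cast hr0.ne'
  have hd0 : (d:ℂ) ≠ 0 := by exact_mod_cast hdR.ne'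
  have hα0 : ((α:ℝ):ℂ) ≠ 0 := by exact_mod_cast hα.ne'
  have hrc : ((r:ℝ):ℂ) ^ 2 * ((α:ℝ):ℂ) = (d:ℂ) := by
    have : r ^ 2 * α = (d:ℝ) := by rw [hr2]; field_simp
    exact_mod_cast this
  have hp := orthonormal_iff_ite.mp p.orthonormal
  -- part (a)
  have parta : ∀ a a' : Fin (d ^ 2),
      ScInner (fun j => φ j) η (L a) (L a') = if a = a' then ((α:ℝ):ℂ) else 0 := by
    intro a a'
    have h1 := hp a a'
    rw [hL a, hL a', inner_smul_left, inner_smul_right, Complex.conj_ofReal] at h1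
    rw [hSc]
    by_cases hc : a = a'
    · simp only [hc, if_pos rfl, if_true, eq_self_iff_true] at h1 ⊢
      have h2 : ((r:ℝ):ℂ) ^ 2 * (inner ℂ (idTensor (L a') Ψ) (idTensor (L a') Ψ) : ℂ) = 1 := by
        rw [sq]; linear_combination h1
      have h3 := congrArg (· * ((α:ℝ):ℂ)) h2
      simp only [one_mul] at h3
      calc (d:ℂ) * (inner ℂ (idTensor (L a') Ψ) (idTensor (L a') Ψ) : ℂ)
          = ((r:ℝ):ℂ) ^ 2 * ((α:ℝ):ℂ) * (inner ℂ (idTensor (L a') Ψ) (idTensor (L a') Ψ) : ℂ) := by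
            rw [hrc]
        _ = ((α:ℝ):ℂ) := by linear_combination h3
    · simp only [hc, if_neg hc] at h1 ⊢
      have h2 : (inner ℂ (idTensor (L a) Ψ) (idTensor (L a') Ψ) : ℂ) = 0 := by
        rcases mul_eq_zero.mp h1 with h | h
        · exact absurd h hrc0
        · rcases mul_eq_zero.mp h with h' | h'
          · exact absurd h' hrc0
          · exact h'
      rw [h2, mul_zero]
      simp
  -- expression of the error operators' vectors via the PVM
  have hLa : ∀ a, idTensor (L a) Ψ = ((r:ℝ):ℂ)⁻¹ • (p a : EuclideanSpace ℂ (Fin d × Fin d)) := by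
    intro a
    rw [hL a, smul_smul, inv_mul_cancel₀ hrc0, one_smul]
  have hScN : ∀ (a : Fin (d ^ 2)) (N : Matrix (Fin d) (Fin d) ℂ),
      ScInner (fun j => φ j) η (L a) N
        = (d : ℂ) * ((r:ℝ):ℂ)⁻¹ * (inner ℂ (p a : EuclideanSpace ℂ (Fin d × Fin d)) (idTensor N Ψ) : ℂ) := by
    intro a N
    rw [hSc, hLa, inner_smul_left, map_inv₀, Complex.conj_ofReal]
    ring
  have hnz : ∀ (a : Fin (d ^ 2)) (N : Matrix (Fin d) (Fin d) ℂ),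
      ScInner (fun j => φ j) η (L a) N ≠ 0 ↔ (inner ℂ (p a : EuclideanSpace ℂ (Fin d × Fin d)) (idTensor N Ψ) : ℂ) ≠ 0 := by
    intro a N
    rw [hScN]
    simp [hd0, hrc0]
  -- part (b)
  have partb : ∀ (Jm : 𝒥) (i i' : I), i ≠ i' →
      {a : Fin (d ^ 2) | ScInner (fun j => φ j) η (L a) (M Jm i) ≠ 0} ∩
        {a : Fin (d ^ 2) | ScInner (fun j => φ j) η (L a) (M Jm i') ≠ 0} = ∅ := by
    intro Jm i i' hii'
    ext a
    simp only [Set.mem_inter_iff, Set.mem_setOf_eq, Set.mem_empty_iff_false, iff_false,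
      not_and]
    intro h1 h2
    rcases hsol Jm a i i' hii' with h | h
    · exact ((hnz a (M Jm i)).mp h1) h
    · exact ((hnz a (M Jm i')).mp h2) h
  -- injectivity of A ↦ (𝕀 ⊗ A)Ψ
  have hinj : ∀ A B : Matrix (Fin d) (Fin d) ℂ, idTensor A Ψ = idTensor B Ψ → A = B := by
    intro A B hAB
    have h0 : idTensor (A - B) Ψ = 0 := by
      rw [idTensor_matrix_sub, hAB, sub_self]
    set C := A - B with hC
    have h1 : (0:ℂ) = ∑ j, ((η j ^ 2 : ℝ) : ℂ) *
        (inner ℂ (Matrix.toEuclideanLin C (φ j)) (Matrix.toEuclideanLin C (φ j)) : ℂ) := by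
      rw [← hinner, h0, inner_zero_right]
    simp only [inner_self_eq_norm_sq_to_K] at h1
    have h2 : ∑ j, η j ^ 2 * ‖Matrix.toEuclideanLin C (φ j)‖ ^ 2 = 0 := by
      have h1' : ((∑ j, η j ^ 2 * ‖Matrix.toEuclideanLin C (φ j)‖ ^ 2 : ℝ) : ℂ) = 0 := by
        push_cast at h1 ⊢
        exact h1.symm
      exact_mod_cast h1'
    have h3 : ∀ j ∈ Finset.univ, η j ^ 2 * ‖Matrix.toEuclideanLin C (φ j)‖ ^ 2 = 0 := by
      apply (Finset.sum_eq_zero_iff_of_nonneg ?_).mp h2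
      intro j _
      positivity
    have h4 : ∀ j, Matrix.toEuclideanLin C (φ j) = 0 := by
      intro j
      have := h3 j (Finset.mem_univ j)
      rcases mul_eq_zero.mp this with h | h
      · exact absurd h (pow_ne_zero 2 (hη j).ne')
      · rwa [pow_eq_zero_iff (by norm_num), norm_eq_zero] at h
    have h5 : Matrix.toEuclideanLin C = Matrix.toEuclideanLin (0 : Matrix (Fin d) (Fin d) ℂ) := by
      apply φ.toBasis.ext
      intro j
      simp [φ.coe_toBasis, h4 j]
    have h6 : C = 0 := Matrix.toEuclideanLin.injective h5
    exact sub_eq_zero.mp h6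
  -- part (c)
  have partc : ∀ (Jm : 𝒥) (i : I),
      M Jm i = ((α : ℝ) : ℂ)⁻¹ •
        ∑ a ∈ Finset.univ.filter
            (fun a : Fin (d ^ 2) => ScInner (fun j => φ j) η (L a) (M Jm i) ≠ 0),
          ScInner (fun j => φ j) η (L a) (M Jm i) • L a := by
    intro Jm i
    have hfil : ∑ a ∈ Finset.univ.filter
            (fun a : Fin (d ^ 2) => ScInner (fun j => φ j) η (L a) (M Jm i) ≠ 0),
          ScInner (fun j => φ j) η (L a) (M Jm i) • L a
        = ∑ a, ScInner (fun j => φ j) η (L a) (M Jm i) • L a := by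
      apply Finset.sum_filter_of_ne
      intro a _ hne hzero
      exact hne (by rw [hzero, zero_smul])
    rw [hfil]
    apply hinj
    rw [idTensor_matrix_smul, idTensor_matrix_sum]
    have hsmul : ∀ a : Fin (d ^ 2),
        idTensor (ScInner (fun j => φ j) η (L a) (M Jm i) • L a) Ψ
          = ScInner (fun j => φ j) η (L a) (M Jm i) • idTensor (L a) Ψ := fun a =>
      idTensor_matrix_smul _ _ _
    conv_rhs => rw [Finset.sum_congr rfl (fun a _ => hsmul a)]
    conv_lhs => rw [← p.sum_repr' (idTensor (M Jm i) Ψ)]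
    rw [Finset.smul_sum]
    apply Finset.sum_congr rfl
    intro a _
    rw [hL a, smul_smul, smul_smul]
    congr 1
    rw [inner_smul_left, Complex.conj_ofReal, hSc]
    field_simp
    linear_combination (inner ℂ (idTensor (L a) Ψ) (idTensor (M Jm i) Ψ) : ℂ) * hrc
  exact ⟨parta, partb, partc⟩
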